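/- Let f ∈ L^∞([0,∞)) with lim_{x→∞} e^{−x}∫₀ˣ f(t)eᵗ dt = α. Then for every φ ∈ L¹([0,∞)), lim_{s→∞} ∫₀^∞ f(x+s)φ(x)dx = α·∫₀^∞ φ(x)dx. (That is, R(f) = α implies the translates f(·+s) converge weak* to the constant α in L^∞([0,∞)).) -/

import Mathlib

open Filter MeasureTheory Set Topology

namespace AbelWS

noncomputable def f0 (f : ℝ → ℝ) : ℝ → ℝ := fun x => if 0 ≤ x then f x else 0

noncomputable def H (f : ℝ → ℝ) : ℝ → ℝ :=
  fun x => Real.exp (-x) * ∫ t in (0:ℝ)..x, f0 f t * Real.exp t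

variable {f : ℝ → ℝ} {C : ℝ}

lemma f0_meas (hm : Measurable f) : Measurable (f0 f) :=
  Measurable.ite measurableSet_Ici hm measurable_const

lemma C_nonneg (hb : ∀ x ≥ (0:ℝ), |f x| ≤ C) : 0 ≤ C :=
  le_trans (abs_nonneg _) (hb 0 le_rfl)

lemma f0_bound (hb : ∀ x ≥ (0:ℝ), |f x| ≤ C) : ∀ x, |f0 f x| ≤ C := by
  intro x
  by_cases hx : 0 ≤ x
  · simpa [f0, hx] using hb x hx
  · simpa [f0, hx] using C_nonneg hb

lemma intInt (hm : Measurable f) (hb : ∀ x ≥ (0:ℝ), |f x| ≤ C) :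
    ∀ a b : ℝ, IntervalIntegrable (fun t => f0 f t * Real.exp t) volume a b := by
  intro a b
  rw [intervalIntegrable_iff]
  apply Measure.integrableOn_of_bounded (M := C * Real.exp (max a b))
  · exact (measure_Ioc_lt_top).ne
  · exact (((f0_meas hm).mul Real.measurable_exp)).aestronglyMeasurable
  · filter_upwards [ae_restrict_mem measurableSet_Ioc] with t ht
    have h1 : |f0 f t| ≤ C := f0_bound hb t
    have h2 : Real.exp t ≤ Real.exp (max a b) := Real.exp_le_exp.2 ht.2
    calc ‖f0 f t * Real.exp t‖ = |f0 f t| * Real.exp t := by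
          rw [Real.norm_eq_abs, abs_mul, abs_of_pos (Real.exp_pos t)]
      _ ≤ C * Real.exp (max a b) :=
          mul_le_mul h1 h2 (Real.exp_pos t).le (C_nonneg hb)

lemma H_cont (hm : Measurable f) (hb : ∀ x ≥ (0:ℝ), |f x| ≤ C) : Continuous (H f) :=
  (Real.continuous_exp.comp continuous_neg).mul
    (intervalIntegral.continuous_primitive (intInt hm hb) 0)

lemma H_bound (hm : Measurable f) (hb : ∀ x ≥ (0:ℝ), |f x| ≤ C) :
    ∀ x, 0 ≤ x → |H f x| ≤ C := by
  intro x hx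
  have hInt := intInt hm hb 0 x
  have h1 : |∫ t in (0:ℝ)..x, f0 f t * Real.exp t| ≤ ∫ t in (0:ℝ)..x, C * Real.exp t := by
    rw [← Real.norm_eq_abs]
    apply intervalIntegral.norm_integral_le_integral_norm hx |>.trans
    apply intervalIntegral.integral_mono_on hx hInt.norm
    · exact (continuous_const.mul Real.continuous_exp).intervalIntegrable 0 x
    · intro t ht
      have := f0_bound hb t
      calc ‖f0 f t * Real.exp t‖ = |f0 f t| * Real.exp t := by
            rw [Real.norm_eq_abs, abs_mul, abs_of_pos (Real.exp_pos t)]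
        _ ≤ C * Real.exp t := by
            exact mul_le_mul_of_nonneg_right this (Real.exp_pos t).le
  have h2 : (∫ t in (0:ℝ)..x, C * Real.exp t) = C * (Real.exp x - 1) := by
    rw [intervalIntegral.integral_const_mul, integral_exp, Real.exp_zero]
  rw [h2] at h1
  have h3 : |H f x| ≤ Real.exp (-x) * (C * (Real.exp x - 1)) := by
    rw [H, abs_mul, abs_of_pos (Real.exp_pos _)]
    exact mul_le_mul_of_nonneg_left h1 (Real.exp_pos _).le
  refine h3.trans ?_
  have hC := C_nonneg hb
  have : Real.exp (-x) * (C * (Real.exp x - 1)) = C - C * Real.exp (-x) := by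
    rw [Real.exp_neg]; field_simp
  rw [this]
  nlinarith [Real.exp_pos (-x), mul_nonneg hC (Real.exp_pos (-x)).le]


lemma H_tendsto {α : ℝ} (hR : Tendsto (fun x : ℝ =>
      Real.exp (-x) * ∫ t in (0 : ℝ)..x, f t * Real.exp t) atTop (𝓝 α)) :
    Tendsto (H f) atTop (𝓝 α) := by
  apply hR.congr'
  filter_upwards [eventually_ge_atTop (0:ℝ)] with x hx
  unfold H
  congr 1
  apply intervalIntegral.integral_congr
  intro t ht
  rw [uIcc_of_le hx] at ht
  simp [f0, ht.1]

lemma H_diff (hm : Measurable f) (hb : ∀ x ≥ (0:ℝ), |f x| ≤ C) (s u : ℝ) :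
    ∫ v in (0:ℝ)..u, f0 f (v + s) * Real.exp v
      = Real.exp u * H f (s + u) - H f s := by
  have h1 : ∀ v : ℝ, f0 f (v + s) * Real.exp v
      = Real.exp (-s) * (f0 f (v + s) * Real.exp (v + s)) := by
    intro v
    rw [Real.exp_add]
    rw [Real.exp_neg]
    field_simp
  calc ∫ v in (0:ℝ)..u, f0 f (v + s) * Real.exp v
      = ∫ v in (0:ℝ)..u, Real.exp (-s) * (f0 f (v + s) * Real.exp (v + s)) := by
        simp_rw [h1]
    _ = Real.exp (-s) * ∫ v in (0:ℝ)..u, (fun t => f0 f t * Real.exp t) (v + s) := by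
        rw [intervalIntegral.integral_const_mul]
    _ = Real.exp (-s) * ∫ t in s..(u + s), f0 f t * Real.exp t := by
        rw [intervalIntegral.integral_comp_add_right (fun t => f0 f t * Real.exp t) s]
        norm_num
    _ = Real.exp (-s) * ((∫ t in (0:ℝ)..(u + s), f0 f t * Real.exp t)
          - ∫ t in (0:ℝ)..s, f0 f t * Real.exp t) := by
        rw [intervalIntegral.integral_interval_sub_left (intInt hm hb 0 (u+s)) (intInt hm hb 0 s)]
    _ = Real.exp u * H f (s + u) - H f s := by
      unfold H
      rw [mul_sub]
      congr 1
      · rw [Real.exp_neg, Real.exp_neg, Real.exp_add]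
        have : u + s = s + u := by ring
        rw [this]
        field_simp



section Nice
variable {φ d : ℝ → ℝ} {B : ℝ}

lemma B_nonneg (hφB : ∀ x, 0 ≤ x → |φ x| ≤ B * Real.exp (-x)) : 0 ≤ B := by
  have := (abs_nonneg (φ 0)).trans (hφB 0 le_rfl)
  simpa using this

lemma psi_bound (hφB : ∀ x, 0 ≤ x → |φ x| ≤ B * Real.exp (-x))
    (hdB : ∀ x, 0 ≤ x → |d x| ≤ B * Real.exp (-x)) :
    ∀ x, 0 ≤ x → |φ x - d x| ≤ 2 * B * Real.exp (-x) := by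
  intro x hx
  calc |φ x - d x| ≤ |φ x| + |d x| := abs_sub _ _
    _ ≤ B * Real.exp (-x) + B * Real.exp (-x) := add_le_add (hφB x hx) (hdB x hx)
    _ = 2 * B * Real.exp (-x) := by ring

lemma int_expPsi (hφc : Continuous φ) (hdc : Continuous d)
    (hφB : ∀ x, 0 ≤ x → |φ x| ≤ B * Real.exp (-x))
    (hdB : ∀ x, 0 ≤ x → |d x| ≤ B * Real.exp (-x)) {v : ℝ} (hv : 0 ≤ v) :
    IntegrableOn (fun u => Real.exp (-u) * (φ u - d u)) (Ioi v) := by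
  apply Integrable.mono' (g := fun u => 2 * B * Real.exp (-(2:ℝ) * u))
  · exact (exp_neg_integrableOn_Ioi v (by norm_num : (0:ℝ) < 2)).const_mul (2*B)
  · exact ((Real.continuous_exp.comp continuous_neg).mul (hφc.sub hdc)).aestronglyMeasurable
  · filter_upwards [ae_restrict_mem measurableSet_Ioi] with u hu
    have hu0 : (0:ℝ) ≤ u := hv.trans (le_of_lt hu)
    have h1 := psi_bound hφB hdB u hu0
    have h2 : Real.exp (-u) * Real.exp (-u) = Real.exp (-(2:ℝ)*u) := by
      rw [← Real.exp_add]; ring_nf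
    calc ‖Real.exp (-u) * (φ u - d u)‖ = Real.exp (-u) * |φ u - d u| := by
          rw [Real.norm_eq_abs, abs_mul, abs_of_pos (Real.exp_pos _)]
      _ ≤ Real.exp (-u) * (2 * B * Real.exp (-u)) :=
          mul_le_mul_of_nonneg_left h1 (Real.exp_pos _).le
      _ = 2 * B * Real.exp (-(2:ℝ)*u) := by rw [← h2]; ring

lemma key_ftc (hdφ : ∀ x, HasDerivAt φ (d x) x) (hdc : Continuous d)
    (hφB : ∀ x, 0 ≤ x → |φ x| ≤ B * Real.exp (-x))
    (hdB : ∀ x, 0 ≤ x → |d x| ≤ B * Real.exp (-x)) {v : ℝ} (hv : 0 ≤ v) :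
    ∫ u in Ici v, Real.exp (-u) * (φ u - d u) = Real.exp (-v) * φ v := by
  have hφc : Continuous φ := by
    rw [continuous_iff_continuousAt]; exact fun x => (hdφ x).continuousAt
  rw [integral_Ici_eq_integral_Ioi]
  have hG : ∀ x ∈ Ici v, HasDerivAt (fun u => -(Real.exp (-u) * φ u))
      (Real.exp (-x) * (φ x - d x)) x := by
    intro x _
    have he : HasDerivAt (fun u : ℝ => Real.exp (-u)) (Real.exp (-x) * (-1)) x :=
      HasDerivAt.exp (hasDerivAt_neg x)
    have := (he.mul (hdφ x)).neg
    refine this.congr_deriv ?_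
    ring
  have htend : Tendsto (fun u => -(Real.exp (-u) * φ u)) atTop (𝓝 0) := by
    apply squeeze_zero_norm' (a := fun u => B * (Real.exp (-u) * Real.exp (-u)))
    · filter_upwards [eventually_ge_atTop (0:ℝ)] with u hu
      calc ‖-(Real.exp (-u) * φ u)‖ = Real.exp (-u) * |φ u| := by
            rw [norm_neg, Real.norm_eq_abs, abs_mul, abs_of_pos (Real.exp_pos _)]
        _ ≤ Real.exp (-u) * (B * Real.exp (-u)) :=
            mul_le_mul_of_nonneg_left (hφB u hu) (Real.exp_pos _).le
        _ = B * (Real.exp (-u) * Real.exp (-u)) := by ring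
    · have := (Real.tendsto_exp_neg_atTop_nhds_zero.mul
        Real.tendsto_exp_neg_atTop_nhds_zero).const_mul B
      simpa using this
  have := integral_Ioi_of_hasDerivAt_of_tendsto' hG
    (int_expPsi hφc hdc hφB hdB hv) htend
  rw [this]; ring


lemma int_psiH (hm : Measurable f) (hb : ∀ x ≥ (0:ℝ), |f x| ≤ C)
    (hφc : Continuous φ) (hdc : Continuous d)
    (hφB : ∀ x, 0 ≤ x → |φ x| ≤ B * Real.exp (-x))
    (hdB : ∀ x, 0 ≤ x → |d x| ≤ B * Real.exp (-x)) {s : ℝ} (hs : 0 ≤ s) :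
    IntegrableOn (fun u => (φ u - d u) * H f (s + u)) (Ici 0) := by
  apply Integrable.mono' (g := fun u => 2 * B * C * Real.exp (-1 * u))
  · exact ((integrableOn_Ici_iff_integrableOn_Ioi (by simp)).2
      (exp_neg_integrableOn_Ioi 0 (by norm_num : (0:ℝ) < 1))).const_mul (2*B*C)
  · exact ((hφc.sub hdc).mul ((H_cont hm hb).comp
      (continuous_const.add continuous_id))).aestronglyMeasurable
  · filter_upwards [ae_restrict_mem measurableSet_Ici] with u hu
    have hu0 : (0:ℝ) ≤ u := hu
    have h1 := psi_bound hφB hdB u hu0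
    have h2 := H_bound hm hb (s + u) (add_nonneg hs hu0)
    calc ‖(φ u - d u) * H f (s + u)‖ = |φ u - d u| * |H f (s + u)| := by
          rw [Real.norm_eq_abs, abs_mul]
      _ ≤ (2 * B * Real.exp (-u)) * C := by
          apply mul_le_mul h1 h2 (abs_nonneg _)
          exact mul_nonneg (by nlinarith [B_nonneg hφB]) (Real.exp_pos _).le
      _ = 2 * B * C * Real.exp (-1 * u) := by rw [neg_one_mul]; ring

lemma key_identity (hm : Measurable f) (hb : ∀ x ≥ (0:ℝ), |f x| ≤ C)
    (hdφ : ∀ x, HasDerivAt φ (d x) x) (hdc : Continuous d)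
    (hφB : ∀ x, 0 ≤ x → |φ x| ≤ B * Real.exp (-x))
    (hdB : ∀ x, 0 ≤ x → |d x| ≤ B * Real.exp (-x)) {s : ℝ} (hs : 0 ≤ s) :
    ∫ x in Ici (0:ℝ), f0 f (x + s) * φ x
      = (∫ u in Ici (0:ℝ), (φ u - d u) * H f (s + u)) - H f s * φ 0 := by
  have hφc : Continuous φ := by
    rw [continuous_iff_continuousAt]; exact fun x => (hdφ x).continuousAt
  have hB := B_nonneg hφB
  have hC := C_nonneg hb
  set μ := volume.restrict (Ici (0:ℝ)) with hμ
  set ψ : ℝ → ℝ := fun u => φ u - d u with hψ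
  set Q : ℝ → ℝ → ℝ := fun v u =>
    (Ici v).indicator (fun w => Real.exp (-w) * ψ w) u * (f0 f (v + s) * Real.exp v) with hQ
  -- Step A
  have stepA : ∀ v ∈ Ici (0:ℝ), (∫ u, Q v u ∂μ) = f0 f (v + s) * φ v := by
    intro v hv
    have : (∫ u, Q v u ∂μ)
        = (∫ u, (Ici v).indicator (fun w => Real.exp (-w) * ψ w) u ∂μ)
            * (f0 f (v + s) * Real.exp v) := by
      rw [← integral_mul_const]
    rw [this, integral_indicator measurableSet_Ici, hμ,
      Measure.restrict_restrict measurableSet_Ici,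
      inter_eq_left.2 (Ici_subset_Ici.2 hv),
      key_ftc hdφ hdc hφB hdB hv]
    have hexp : Real.exp (-v) * Real.exp v = 1 := by
      rw [← Real.exp_add]; simp
    linear_combination (f0 f (v + s) * φ v) * hexp
  -- Step B : integrability on product
  have hQmeas : AEStronglyMeasurable (Function.uncurry Q) (μ.prod μ) := by
    have : Function.uncurry Q = fun p : ℝ × ℝ =>
        (if p.1 ≤ p.2 then Real.exp (-p.2) * ψ p.2 else 0)
          * (f0 f (p.1 + s) * Real.exp p.1) := by
      funext p
      simp only [Function.uncurry, hQ, Set.indicator_apply, mem_Ici]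
    rw [this]
    apply Measurable.aestronglyMeasurable
    apply Measurable.mul
    · exact Measurable.ite (measurableSet_le measurable_fst measurable_snd)
        (((Real.measurable_exp.comp measurable_neg).mul
          ((hφc.sub hdc).measurable)).comp measurable_snd) measurable_const
    · exact (((f0_meas hm).comp (measurable_fst.add_const s)).mul
        ((Real.measurable_exp.comp measurable_fst)))
  have hprodae : ∀ᵐ p : ℝ × ℝ ∂μ.prod μ, p ∈ (Ici (0:ℝ)) ×ˢ (Ici (0:ℝ)) := by
    rw [hμ, Measure.prod_restrict]
    exact ae_restrict_mem (measurableSet_Ici.prod measurableSet_Ici)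
  have hQint : Integrable (Function.uncurry Q) (μ.prod μ) := by
    apply Integrable.mono' (g := fun p : ℝ × ℝ =>
      (2 * B * C * Real.exp (-(1/2:ℝ) * p.1)) * Real.exp (-(1/2:ℝ) * p.2))
    · exact Integrable.mul_prod
        (L := ℝ) (f := fun v : ℝ => 2 * B * C * Real.exp (-(1/2:ℝ) * v))
        (g := fun u : ℝ => Real.exp (-(1/2:ℝ) * u))
        (((integrableOn_Ici_iff_integrableOn_Ioi (by simp)).2
          (exp_neg_integrableOn_Ioi 0 (by norm_num : (0:ℝ) < 1/2))).const_mul (2*B*C))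
        ((integrableOn_Ici_iff_integrableOn_Ioi (by simp)).2
          (exp_neg_integrableOn_Ioi 0 (by norm_num : (0:ℝ) < 1/2)))
    · exact hQmeas
    · filter_upwards [hprodae] with p hp
      obtain ⟨hv, hu⟩ := hp
      simp only [mem_Ici] at hv hu
      rcases le_or_gt p.1 p.2 with hle | hlt
      · have h1 : |Real.exp (-p.2) * ψ p.2| ≤ 2 * B * (Real.exp (-p.2) * Real.exp (-p.2)) := by
          rw [abs_mul, abs_of_pos (Real.exp_pos _)]
          calc Real.exp (-p.2) * |ψ p.2|
              ≤ Real.exp (-p.2) * (2 * B * Real.exp (-p.2)) :=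
                mul_le_mul_of_nonneg_left (psi_bound hφB hdB p.2 hu) (Real.exp_pos _).le
            _ = 2 * B * (Real.exp (-p.2) * Real.exp (-p.2)) := by ring
        have h2 : |f0 f (p.1 + s) * Real.exp p.1| ≤ C * Real.exp p.1 := by
          rw [abs_mul, abs_of_pos (Real.exp_pos _)]
          exact mul_le_mul_of_nonneg_right (f0_bound hb _) (Real.exp_pos _).le
        have h3 : Real.exp (-p.2) * Real.exp (-p.2) * Real.exp p.1
            ≤ Real.exp (-(1/2:ℝ) * p.1) * Real.exp (-(1/2:ℝ) * p.2) := by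
          rw [← Real.exp_add, ← Real.exp_add, ← Real.exp_add]
          apply Real.exp_le_exp.2
          linarith
        calc ‖Q p.1 p.2‖ = |Real.exp (-p.2) * ψ p.2| * |f0 f (p.1 + s) * Real.exp p.1| := by
              rw [hQ]
              simp only [Real.norm_eq_abs, abs_mul, Set.indicator_apply, mem_Ici, if_pos hle]
          _ ≤ (2 * B * (Real.exp (-p.2) * Real.exp (-p.2))) * (C * Real.exp p.1) := by
              apply mul_le_mul h1 h2 (abs_nonneg _)
              positivity
          _ = 2 * B * C * (Real.exp (-p.2) * Real.exp (-p.2) * Real.exp p.1) := by ring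
          _ ≤ 2 * B * C * (Real.exp (-(1/2:ℝ) * p.1) * Real.exp (-(1/2:ℝ) * p.2)) :=
              mul_le_mul_of_nonneg_left h3 (by positivity)
          _ = (2 * B * C * Real.exp (-(1/2:ℝ) * p.1)) * Real.exp (-(1/2:ℝ) * p.2) := by ring
      · have hz : Q p.1 p.2 = 0 := by
          rw [hQ]
          simp only [Set.indicator_apply, mem_Ici, if_neg (not_le.2 hlt), zero_mul]
        show ‖Q p.1 p.2‖ ≤ _
        rw [hz]
        simp only [norm_zero]
        positivity
  -- Step D
  have stepD : ∀ u ∈ Ici (0:ℝ), (∫ v, Q v u ∂μ)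
      = ψ u * H f (s + u) - Real.exp (-u) * ψ u * H f s := by
    intro u hu
    have hu0 : (0:ℝ) ≤ u := hu
    have hfun : (fun v => Q v u)
        = (Iic u).indicator (fun v => (Real.exp (-u) * ψ u) * (f0 f (v + s) * Real.exp v)) := by
      funext v
      simp only [hQ, Set.indicator_apply, mem_Ici, mem_Iic, ite_mul, zero_mul]
    rw [hfun, integral_indicator measurableSet_Iic, hμ,
      Measure.restrict_restrict measurableSet_Iic]
    have hset : Iic u ∩ Ici (0:ℝ) = Icc 0 u := by
      rw [inter_comm, Ici_inter_Iic]
    rw [hset, integral_Icc_eq_integral_Ioc, ← intervalIntegral.integral_of_le hu0,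
      intervalIntegral.integral_const_mul, H_diff hm hb s u]
    have hexp : Real.exp (-u) * Real.exp u = 1 := by rw [← Real.exp_add]; simp
    linear_combination (ψ u * H f (s + u)) * hexp
  -- assemble
  calc ∫ x in Ici (0:ℝ), f0 f (x + s) * φ x
      = ∫ v, (∫ u, Q v u ∂μ) ∂μ := by
        rw [hμ]
        exact (setIntegral_congr_fun measurableSet_Ici (fun v hv => (stepA v hv).symm))
    _ = ∫ u, (∫ v, Q v u ∂μ) ∂μ := integral_integral_swap hQint
    _ = ∫ u in Ici (0:ℝ), (ψ u * H f (s + u) - Real.exp (-u) * ψ u * H f s) := by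
        rw [hμ]
        exact setIntegral_congr_fun measurableSet_Ici stepD
    _ = (∫ u in Ici (0:ℝ), ψ u * H f (s + u))
          - (∫ u in Ici (0:ℝ), Real.exp (-u) * ψ u) * H f s := by
        rw [integral_sub (int_psiH hm hb hφc hdc hφB hdB hs)
          (((int_expPsi hφc hdc hφB hdB le_rfl).congr_set_ae Ioi_ae_eq_Ici.symm
            ).mul_const (H f s))]
        rw [integral_mul_const]
    _ = (∫ u in Ici (0:ℝ), (φ u - d u) * H f (s + u)) - H f s * φ 0 := by
        rw [key_ftc hdφ hdc hφB hdB le_rfl]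
        simp [hψ]
        ring


lemma nice_tendsto {α : ℝ} (hm : Measurable f) (hb : ∀ x ≥ (0:ℝ), |f x| ≤ C)
    (hR : Tendsto (fun x : ℝ =>
        Real.exp (-x) * ∫ t in (0 : ℝ)..x, f t * Real.exp t) atTop (𝓝 α))
    (hdφ : ∀ x, HasDerivAt φ (d x) x) (hdc : Continuous d)
    (hφB : ∀ x, 0 ≤ x → |φ x| ≤ B * Real.exp (-x))
    (hdB : ∀ x, 0 ≤ x → |d x| ≤ B * Real.exp (-x)) :
    Tendsto (fun s : ℝ => ∫ x in Ici (0:ℝ), f0 f (x + s) * φ x) atTop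
      (𝓝 (α * ∫ x in Ici (0:ℝ), φ x)) := by
  have hφc : Continuous φ := by
    rw [continuous_iff_continuousAt]; exact fun x => (hdφ x).continuousAt
  have hB := B_nonneg hφB
  have hC := C_nonneg hb
  have hH := H_tendsto (f := f) hR
  -- integral of psi
  have hIφ : IntegrableOn φ (Ici (0:ℝ)) := by
    apply Integrable.mono' (g := fun u => B * Real.exp (-1 * u))
    · exact ((integrableOn_Ici_iff_integrableOn_Ioi (by simp)).2
        (exp_neg_integrableOn_Ioi 0 (by norm_num : (0:ℝ) < 1))).const_mul B
    · exact hφc.aestronglyMeasurable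
    · filter_upwards [ae_restrict_mem measurableSet_Ici] with u hu
      rw [neg_one_mul]
      exact hφB u hu
  have hId : IntegrableOn d (Ici (0:ℝ)) := by
    apply Integrable.mono' (g := fun u => B * Real.exp (-1 * u))
    · exact ((integrableOn_Ici_iff_integrableOn_Ioi (by simp)).2
        (exp_neg_integrableOn_Ioi 0 (by norm_num : (0:ℝ) < 1))).const_mul B
    · exact hdc.aestronglyMeasurable
    · filter_upwards [ae_restrict_mem measurableSet_Ici] with u hu
      rw [neg_one_mul]
      exact hdB u hu
  have hdint : ∫ u in Ici (0:ℝ), d u = -φ 0 := by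
    rw [integral_Ici_eq_integral_Ioi]
    have htend : Tendsto φ atTop (𝓝 0) := by
      apply squeeze_zero_norm' (a := fun u => B * Real.exp (-u))
      · filter_upwards [eventually_ge_atTop (0:ℝ)] with u hu
        exact hφB u hu
      · simpa using Real.tendsto_exp_neg_atTop_nhds_zero.const_mul B
    have := integral_Ioi_of_hasDerivAt_of_tendsto' (f := φ) (f' := d) (a := 0)
      (fun x _ => hdφ x) (hId.mono_set Ioi_subset_Ici_self) htend
    rw [this]; ring
  have hψint : ∫ u in Ici (0:ℝ), (φ u - d u) = (∫ x in Ici (0:ℝ), φ x) + φ 0 := by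
    rw [integral_sub hIφ hId, hdint]; ring
  -- DCT for the main term
  have hmain : Tendsto (fun s : ℝ => ∫ u in Ici (0:ℝ), (φ u - d u) * H f (s + u)) atTop
      (𝓝 (∫ u in Ici (0:ℝ), (φ u - d u) * α)) := by
    apply tendsto_integral_filter_of_dominated_convergence
      (bound := fun u => 2 * B * C * Real.exp (-u))
    · filter_upwards with s
      exact ((hφc.sub hdc).mul ((H_cont hm hb).comp
        (continuous_const.add continuous_id))).aestronglyMeasurable
    · filter_upwards [eventually_ge_atTop (0:ℝ)] with s hs
      filter_upwards [ae_restrict_mem measurableSet_Ici] with u hu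
      calc ‖(φ u - d u) * H f (s + u)‖ = |φ u - d u| * |H f (s + u)| := by
            rw [Real.norm_eq_abs, abs_mul]
        _ ≤ (2 * B * Real.exp (-u)) * C := by
            apply mul_le_mul (psi_bound hφB hdB u hu)
              (H_bound hm hb _ (add_nonneg hs hu)) (abs_nonneg _)
            exact mul_nonneg (by nlinarith) (Real.exp_pos _).le
        _ = 2 * B * C * Real.exp (-u) := by ring
    · exact (((integrableOn_Ici_iff_integrableOn_Ioi (by simp)).2
        (exp_neg_integrableOn_Ioi 0 (by norm_num : (0:ℝ) < 1))).const_mul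
          (2*B*C)).congr (by
            filter_upwards with u
            rw [neg_one_mul])
    · filter_upwards with u
      exact (hH.comp (tendsto_atTop_add_const_right atTop u tendsto_id)).const_mul _
  -- assemble
  have hfinal : Tendsto (fun s : ℝ =>
      (∫ u in Ici (0:ℝ), (φ u - d u) * H f (s + u)) - H f s * φ 0) atTop
      (𝓝 (α * ∫ x in Ici (0:ℝ), φ x)) := by
    have h2 : Tendsto (fun s : ℝ => H f s * φ 0) atTop (𝓝 (α * φ 0)) :=
      hH.mul_const _
    have := hmain.sub h2
    have heq : (∫ u in Ici (0:ℝ), (φ u - d u) * α) - α * φ 0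
        = α * ∫ x in Ici (0:ℝ), φ x := by
      rw [integral_mul_const, hψint]; ring
    rwa [heq] at this
  apply hfinal.congr'
  filter_upwards [eventually_ge_atTop (0:ℝ)] with s hs
  exact (key_identity hm hb hdφ hdc hφB hdB hs).symm

end Nice

lemma int_T (hm : Measurable f) (hb : ∀ x ≥ (0:ℝ), |f x| ≤ C)
    {φ : ℝ → ℝ} (hφ : IntegrableOn φ (Ici (0:ℝ))) (s : ℝ) :
    IntegrableOn (fun x => f0 f (x + s) * φ x) (Ici (0:ℝ)) := by
  apply Integrable.mono' (g := fun x => C * |φ x|)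
  · exact hφ.abs.const_mul C
  · exact (((f0_meas hm).comp (measurable_add_const s)).aestronglyMeasurable.mul
      hφ.aestronglyMeasurable)
  · filter_upwards with x
    rw [Real.norm_eq_abs, abs_mul]
    exact mul_le_mul_of_nonneg_right (f0_bound hb _) (abs_nonneg _)

lemma bound_T (hm : Measurable f) (hb : ∀ x ≥ (0:ℝ), |f x| ≤ C)
    {φ : ℝ → ℝ} (hφ : IntegrableOn φ (Ici (0:ℝ))) (s : ℝ) :
    |∫ x in Ici (0:ℝ), f0 f (x + s) * φ x| ≤ C * ∫ x in Ici (0:ℝ), |φ x| := by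
  rw [← Real.norm_eq_abs]
  refine (norm_integral_le_integral_norm _).trans ?_
  rw [← integral_const_mul]
  apply setIntegral_mono_on ((int_T hm hb hφ s).norm) (hφ.abs.const_mul C) measurableSet_Ici
  intro x _
  rw [Real.norm_eq_abs, abs_mul]
  exact mul_le_mul_of_nonneg_right (f0_bound hb _) (abs_nonneg _)

lemma density {φ : ℝ → ℝ} (hφ : IntegrableOn φ (Ici (0:ℝ))) {ε : ℝ} (hε : 0 < ε) :
    ∃ (g dg : ℝ → ℝ) (B : ℝ), (∀ x, HasDerivAt g (dg x) x) ∧ Continuous dg ∧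
      (∀ x, 0 ≤ x → |g x| ≤ B * Real.exp (-x)) ∧
      (∀ x, 0 ≤ x → |dg x| ≤ B * Real.exp (-x)) ∧
      (∫ x in Ici (0:ℝ), |φ x - g x|) ≤ ε := by
  set φt := (Ici (0:ℝ)).indicator φ with hφt_def
  have hφt : Integrable φt := (integrable_indicator_iff measurableSet_Ici).2 hφ
  obtain ⟨g₁, hg₁supp, hg₁near, hg₁cont, hg₁int⟩ :=
    hφt.exists_hasCompactSupport_integral_sub_le (half_pos hε)
  -- support bound
  obtain ⟨A, hA⟩ := hg₁supp.isCompact.bddAbove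
  have hg₁zero : ∀ x, A + 1 ≤ x → g₁ x = 0 := by
    intro x hx
    apply image_eq_zero_of_notMem_tsupport
    intro hmem
    have := hA hmem
    linarith
  set m : ℝ → ℝ := fun x => g₁ x * Real.exp x with hm_def
  have hmcont : Continuous m := hg₁cont.mul Real.continuous_exp
  set M : ℝ → ℝ := fun u => if 0 < u then m (-Real.log u) else 0 with hM_def
  have hMzero : ∀ u, u < Real.exp (-(A+1)) → M u = 0 := by
    intro u hu
    by_cases h : 0 < u
    · have hlog : Real.log u < -(A+1) := (Real.log_lt_iff_lt_exp h).2 hu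
      simp only [hM_def, if_pos h, hm_def]
      rw [hg₁zero (-Real.log u) (by linarith)]
      ring
    · simp [hM_def, h]
  have hMcont : ContinuousOn M (Icc 0 1) := by
    intro u hu
    rcases hu.1.eq_or_lt with h0 | h0
    · apply ContinuousAt.continuousWithinAt
      have heq : M =ᶠ[𝓝 u] (fun _ => (0:ℝ)) := by
        apply eventually_of_mem (Iio_mem_nhds (h0 ▸ Real.exp_pos (-(A+1))))
        intro y hy
        exact hMzero y hy
      exact continuousAt_const.congr heq.symm
    · apply ContinuousAt.continuousWithinAt
      have hc : ContinuousAt (fun u => m (-Real.log u)) u :=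
        hmcont.continuousAt.comp ((Real.continuousAt_log (ne_of_gt h0)).neg)
      apply hc.congr
      apply eventually_of_mem (isOpen_Ioi.mem_nhds h0)
      intro y hy
      simp [hM_def, (mem_Ioi.1 hy)]
  obtain ⟨p, hp⟩ := exists_polynomial_near_of_continuousOn 0 1 M hMcont (ε/2) (half_pos hε)
  obtain ⟨Pb, hPb⟩ := (isCompact_Icc (a := (0:ℝ)) (b := 1)).exists_bound_of_continuousOn
    (Polynomial.continuous p).continuousOn
  obtain ⟨Pd, hPd⟩ := (isCompact_Icc (a := (0:ℝ)) (b := 1)).exists_bound_of_continuousOn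
    (Polynomial.continuous p.derivative).continuousOn
  have hPb0 : 0 ≤ Pb := le_trans (norm_nonneg _) (hPb 0 (by norm_num))
  have hPd0 : 0 ≤ Pd := le_trans (norm_nonneg _) (hPd 0 (by norm_num))
  set g : ℝ → ℝ := fun x => Real.exp (-x) * p.eval (Real.exp (-x)) with hg_def
  set dg : ℝ → ℝ := fun x => (Real.exp (-x) * (-1)) * p.eval (Real.exp (-x))
    + Real.exp (-x) * (p.derivative.eval (Real.exp (-x)) * (Real.exp (-x) * (-1))) with hdg_def
  have hmem : ∀ x : ℝ, 0 ≤ x → Real.exp (-x) ∈ Icc (0:ℝ) 1 := by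
    intro x hx
    exact ⟨(Real.exp_pos _).le, Real.exp_le_one_iff.2 (by linarith)⟩
  refine ⟨g, dg, Pb + Pd, ?_, ?_, ?_, ?_, ?_⟩
  · intro x
    have he : HasDerivAt (fun x : ℝ => Real.exp (-x)) (Real.exp (-x) * (-1)) x :=
      HasDerivAt.exp (hasDerivAt_neg x)
    have hpe : HasDerivAt (fun x : ℝ => p.eval (Real.exp (-x)))
        (p.derivative.eval (Real.exp (-x)) * (Real.exp (-x) * (-1))) x :=
      (Polynomial.hasDerivAt p _).comp x he
    exact he.mul hpe
  · apply Continuous.add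
    · exact ((Real.continuous_exp.comp continuous_neg).mul continuous_const).mul
        ((Polynomial.continuous p).comp (Real.continuous_exp.comp continuous_neg))
    · exact (Real.continuous_exp.comp continuous_neg).mul
        (((Polynomial.continuous p.derivative).comp
          (Real.continuous_exp.comp continuous_neg)).mul
          ((Real.continuous_exp.comp continuous_neg).mul continuous_const))
  · intro x hx
    have h1 := hPb _ (hmem x hx)
    rw [hg_def, abs_mul, abs_of_pos (Real.exp_pos _)]
    have : |p.eval (Real.exp (-x))| ≤ Pb + Pd := by
      rw [← Real.norm_eq_abs]; linarith
    calc Real.exp (-x) * |Polynomial.eval (Real.exp (-x)) p|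
        ≤ Real.exp (-x) * (Pb + Pd) := mul_le_mul_of_nonneg_left this (Real.exp_pos _).le
      _ = (Pb + Pd) * Real.exp (-x) := by ring
  · intro x hx
    have h1 := hPb _ (hmem x hx)
    have h2 := hPd _ (hmem x hx)
    rw [Real.norm_eq_abs] at h1 h2
    have hele : Real.exp (-x) ≤ 1 := Real.exp_le_one_iff.2 (by linarith)
    have hep := (Real.exp_pos (-x)).le
    rw [hdg_def]
    have hb1 : |(Real.exp (-x) * (-1)) * p.eval (Real.exp (-x))| ≤ Real.exp (-x) * Pb := by
      simp only [abs_mul, abs_neg, abs_one, mul_one, abs_of_pos (Real.exp_pos (-x))]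
      exact mul_le_mul_of_nonneg_left h1 hep
    have hb2 : |Real.exp (-x) * (p.derivative.eval (Real.exp (-x)) * (Real.exp (-x) * (-1)))|
        ≤ Real.exp (-x) * Pd := by
      simp only [abs_mul, abs_neg, abs_one, mul_one, abs_of_pos (Real.exp_pos (-x))]
      calc Real.exp (-x) * (|p.derivative.eval (Real.exp (-x))| * Real.exp (-x))
          ≤ Real.exp (-x) * (Pd * 1) := by
            apply mul_le_mul_of_nonneg_left _ hep
            exact mul_le_mul h2 hele hep hPd0
        _ = Real.exp (-x) * Pd := by ring
    calc |(Real.exp (-x) * (-1)) * p.eval (Real.exp (-x))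
          + Real.exp (-x) * (p.derivative.eval (Real.exp (-x)) * (Real.exp (-x) * (-1)))|
        ≤ Real.exp (-x) * Pb + Real.exp (-x) * Pd := (abs_add_le _ _).trans (add_le_add hb1 hb2)
      _ = (Pb + Pd) * Real.exp (-x) := by ring
  · -- the L¹ estimate
    have hgb : ∀ x : ℝ, |g x| ≤ Pb * Real.exp (-x) ∨ True := fun _ => Or.inr trivial
    have hg_int : IntegrableOn g (Ici (0:ℝ)) := by
      apply Integrable.mono' (g := fun x => Pb * Real.exp (-x))
      · exact (((integrableOn_Ici_iff_integrableOn_Ioi (by simp)).2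
          (exp_neg_integrableOn_Ioi 0 (by norm_num : (0:ℝ) < 1))).const_mul Pb).congr (by
            filter_upwards with u; rw [neg_one_mul])
      · exact ((Real.continuous_exp.comp continuous_neg).mul
          ((Polynomial.continuous p).comp
            (Real.continuous_exp.comp continuous_neg))).aestronglyMeasurable
      · filter_upwards [ae_restrict_mem measurableSet_Ici] with x hx
        have h1 := hPb _ (hmem x hx)
        rw [Real.norm_eq_abs, hg_def, abs_mul, abs_of_pos (Real.exp_pos _)]
        rw [Real.norm_eq_abs] at h1
        calc Real.exp (-x) * |Polynomial.eval (Real.exp (-x)) p|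
            ≤ Real.exp (-x) * Pb := mul_le_mul_of_nonneg_left h1 (Real.exp_pos _).le
          _ = Pb * Real.exp (-x) := by ring
    have hkey : ∀ x ∈ Ici (0:ℝ), |g₁ x - g x| ≤ (ε/2) * Real.exp (-x) := by
      intro x hx
      have hu := hmem x hx
      have hM : M (Real.exp (-x)) = m x := by
        simp only [hM_def, if_pos (Real.exp_pos (-x)), Real.log_exp, neg_neg]
      have hexp1 : Real.exp (-x) * Real.exp x = 1 := by
        rw [← Real.exp_add]; simp
      have hdiff : g₁ x - g x = Real.exp (-x) * (M (Real.exp (-x))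
          - p.eval (Real.exp (-x))) := by
        rw [hM, hm_def, hg_def]
        simp only []
        linear_combination (- g₁ x) * hexp1
      rw [hdiff, abs_mul, abs_of_pos (Real.exp_pos _)]
      have := (hp _ hu)
      rw [abs_sub_comm] at this
      calc Real.exp (-x) * |M (Real.exp (-x)) - p.eval (Real.exp (-x))|
          ≤ Real.exp (-x) * (ε/2) := mul_le_mul_of_nonneg_left this.le (Real.exp_pos _).le
        _ = (ε/2) * Real.exp (-x) := by ring
    have hint1 : IntegrableOn (fun x => |φ x - g₁ x|) (Ici (0:ℝ)) :=
      (hφ.sub hg₁int.integrableOn).abs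
    have hint2 : IntegrableOn (fun x => |g₁ x - g x|) (Ici (0:ℝ)) :=
      (hg₁int.integrableOn.sub hg_int).abs
    have hexpint : IntegrableOn (fun x => (ε/2) * Real.exp (-x)) (Ici (0:ℝ)) := by
      exact (((integrableOn_Ici_iff_integrableOn_Ioi (by simp)).2
        (exp_neg_integrableOn_Ioi 0 (by norm_num : (0:ℝ) < 1))).const_mul (ε/2)).congr (by
          filter_upwards with u; rw [neg_one_mul])
    have step1 : (∫ x in Ici (0:ℝ), |φ x - g x|)
        ≤ (∫ x in Ici (0:ℝ), (|φ x - g₁ x| + |g₁ x - g x|)) := by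
      apply setIntegral_mono_on ((hφ.sub hg_int).abs) (hint1.add hint2) measurableSet_Ici
      intro x _
      exact abs_sub_le _ _ _
    have step2 : (∫ x in Ici (0:ℝ), (|φ x - g₁ x| + |g₁ x - g x|))
        = (∫ x in Ici (0:ℝ), |φ x - g₁ x|) + ∫ x in Ici (0:ℝ), |g₁ x - g x| :=
      integral_add hint1 hint2
    have step3 : (∫ x in Ici (0:ℝ), |φ x - g₁ x|) ≤ ε/2 := by
      have heq : (∫ x in Ici (0:ℝ), |φ x - g₁ x|) = ∫ x in Ici (0:ℝ), ‖φt x - g₁ x‖ := by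
        apply setIntegral_congr_fun measurableSet_Ici
        intro x hx
        simp only [hφt_def, Set.indicator_of_mem hx, Real.norm_eq_abs]
      rw [heq]
      refine le_trans (setIntegral_le_integral ((hφt.sub hg₁int).norm)
        (Eventually.of_forall (fun x => norm_nonneg _))) hg₁near
    have step4 : (∫ x in Ici (0:ℝ), |g₁ x - g x|) ≤ ε/2 := by
      refine le_trans (setIntegral_mono_on hint2 hexpint measurableSet_Ici hkey) ?_
      rw [integral_const_mul, integral_Ici_eq_integral_Ioi, integral_exp_neg_Ioi_zero]
      linarith
    linarith [step1, step2 ▸ step1]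

end AbelWS


/-- If `R(f) = lim_{x→∞} e^{−x}∫₀ˣ f(t)eᵗ dt = α`, then the translates
`f(·+s)` converge weak* in `L^∞([0,∞))` to the constant `α`. -/
theorem abel_limit_implies_weakStar_translates (f : ℝ → ℝ) (C α : ℝ)
    (hm : Measurable f) (hb : ∀ x ≥ (0 : ℝ), |f x| ≤ C)
    (hR : Tendsto (fun x : ℝ =>
        Real.exp (-x) * ∫ t in (0 : ℝ)..x, f t * Real.exp t) atTop (𝓝 α)) :
    ∀ φ : ℝ → ℝ, IntegrableOn φ (Ici (0 : ℝ)) →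
      Tendsto (fun s : ℝ => ∫ x in Ici (0 : ℝ), f (x + s) * φ x) atTop
        (𝓝 (α * ∫ x in Ici (0 : ℝ), φ x)) := by
  intro φ hφ
  have hC := AbelWS.C_nonneg hb
  have hred : (fun s : ℝ => ∫ x in Ici (0:ℝ), AbelWS.f0 f (x + s) * φ x)
      =ᶠ[atTop] (fun s : ℝ => ∫ x in Ici (0:ℝ), f (x + s) * φ x) := by
    filter_upwards [eventually_ge_atTop (0:ℝ)] with s hs
    apply setIntegral_congr_fun measurableSet_Ici
    intro x hx
    simp [AbelWS.f0, add_nonneg (mem_Ici.1 hx) hs]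
  apply Tendsto.congr' hred
  rw [Metric.tendsto_nhds]
  intro ε hε
  set K : ℝ := C + |α| + 1 with hK_def
  have hKpos : 0 < K := by positivity
  set η : ℝ := ε / (2 * K) with hη_def
  have hη : 0 < η := by positivity
  obtain ⟨g, dg, B, hgd, hdgc, hgB, hdgB, hnear⟩ := AbelWS.density hφ hη
  have hgc : Continuous g := continuous_iff_continuousAt.2 fun x => (hgd x).continuousAt
  have hg_int : IntegrableOn g (Ici (0:ℝ)) := by
    apply Integrable.mono' (g := fun u => B * Real.exp (-1 * u))
    · exact ((integrableOn_Ici_iff_integrableOn_Ioi (by simp)).2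
        (exp_neg_integrableOn_Ioi 0 (by norm_num : (0:ℝ) < 1))).const_mul B
    · exact hgc.aestronglyMeasurable
    · filter_upwards [ae_restrict_mem measurableSet_Ici] with u hu
      rw [neg_one_mul]
      exact hgB u hu
  have hTg := AbelWS.nice_tendsto hm hb hR hgd hdgc hgB hdgB
  rw [Metric.tendsto_nhds] at hTg
  filter_upwards [hTg (ε/2) (by linarith), eventually_ge_atTop (0:ℝ)] with s hs1 hs2
  rw [Real.dist_eq] at hs1 ⊢
  set Tφ := ∫ x in Ici (0:ℝ), AbelWS.f0 f (x + s) * φ x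
  set Tg := ∫ x in Ici (0:ℝ), AbelWS.f0 f (x + s) * g x
  have hsub : Tφ - Tg = ∫ x in Ici (0:ℝ), AbelWS.f0 f (x + s) * (φ x - g x) := by
    rw [← integral_sub (AbelWS.int_T hm hb hφ s) (AbelWS.int_T hm hb hg_int s)]
    apply setIntegral_congr_fun measurableSet_Ici
    intro x _
    ring
  have h1 : |Tφ - Tg| ≤ C * η := by
    rw [hsub]
    refine le_trans (AbelWS.bound_T hm hb (hφ.sub hg_int) s) ?_
    exact mul_le_mul_of_nonneg_left hnear hC
  have h2 : |α * (∫ x in Ici (0:ℝ), g x) - α * (∫ x in Ici (0:ℝ), φ x)| ≤ |α| * η := by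
    rw [← mul_sub, abs_mul]
    apply mul_le_mul_of_nonneg_left _ (abs_nonneg α)
    have hsub2 : (∫ x in Ici (0:ℝ), g x) - (∫ x in Ici (0:ℝ), φ x)
        = ∫ x in Ici (0:ℝ), (g x - φ x) := (integral_sub hg_int hφ).symm
    rw [hsub2, ← Real.norm_eq_abs]
    refine le_trans (norm_integral_le_integral_norm _) ?_
    refine le_trans (le_of_eq ?_) hnear
    apply setIntegral_congr_fun measurableSet_Ici
    intro x _
    simp [abs_sub_comm]
  have hKη : K * η = ε / 2 := by
    rw [hη_def]
    field_simp
  have hsmall : (C + |α|) * η < ε / 2 := by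
    have h3 : (C + |α|) * η < K * η := by
      apply mul_lt_mul_of_pos_right _ hη
      rw [hK_def]
      linarith
    linarith
  calc |Tφ - α * ∫ x in Ici (0:ℝ), φ x|
      ≤ |Tφ - Tg| + |Tg - α * (∫ x in Ici (0:ℝ), g x)|
        + |α * (∫ x in Ici (0:ℝ), g x) - α * (∫ x in Ici (0:ℝ), φ x)| := by
        have := abs_sub_le Tφ Tg (α * ∫ x in Ici (0:ℝ), φ x)
        have h4 := abs_sub_le Tg (α * (∫ x in Ici (0:ℝ), g x)) (α * ∫ x in Ici (0:ℝ), φ x)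
        linarith
    _ < C * η + ε/2 + |α| * η := by
        apply add_lt_add_of_lt_of_le _ h2
        apply add_lt_add_of_le_of_lt h1 hs1
    _ < ε := by nlinarith [hsmall]
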